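/- arXiv:1612.02843 — 2 statements merged into one kernel-verified Lean document; each statement's English description precedes it below -/
import Mathlib

section
/- Let G be a finite connected graph of order n ≥ 2. Then the strong resolving graph G_SR is isomorphic to the complete graph K_n on n vertices if and only if G is isomorphic to K_n. -/
open SimpleGraph

variable {V : Type*}

/-- `u` is maximally distant from `v` in `G`: every neighbor `w` of `u`
satisfies `d(v,w) ≤ d(v,u)`. -/
def MaxDistant (G : SimpleGraph V) (u v : V) : Prop :=
  ∀ w, G.Adj u w → G.dist v w ≤ G.dist v u

/-- `u` and `v` are mutually maximally distant in `G`. -/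
def MMD (G : SimpleGraph V) (u v : V) : Prop :=
  MaxDistant G u v ∧ MaxDistant G v u

/-- The boundary of `G`: vertices maximally distant from some vertex. -/
def boundary (G : SimpleGraph V) : Set V := {u | ∃ v, MaxDistant G u v}

/-- The strong resolving graph on the whole vertex set (`G_{SR+I}`):
two vertices are adjacent iff they are distinct and mutually maximally distant. -/
def srGraphI (G : SimpleGraph V) : SimpleGraph V where
  Adj u v := u ≠ v ∧ MMD G u v
  symm := by
    refine ⟨?_⟩
    rintro u v ⟨hne, h1, h2⟩
    exact ⟨hne.symm, h2, h1⟩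
  loopless := by
    refine ⟨?_⟩
    rintro u ⟨hne, _⟩
    exact hne rfl

/-- The strong resolving graph `G_SR`, with vertex set the boundary of `G`. -/
def srGraph (G : SimpleGraph V) : SimpleGraph (boundary G) :=
  (srGraphI G).induce (boundary G)

/-- `u` and `v` are true twins: distinct vertices with equal closed neighborhoods. -/
def TrueTwins (G : SimpleGraph V) (u v : V) : Prop :=
  u ≠ v ∧ insert u (G.neighborSet u) = insert v (G.neighborSet v)

/-- `u` and `v` are false twins: distinct vertices with equal open neighborhoods. -/
def FalseTwins (G : SimpleGraph V) (u v : V) : Prop :=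
  u ≠ v ∧ G.neighborSet u = G.neighborSet v

/-- A vertex is simplicial if its neighborhood induces a complete graph. -/
def IsSimplicial (G : SimpleGraph V) (v : V) : Prop :=
  ∀ a b, G.Adj v a → G.Adj v b → a ≠ b → G.Adj a b

/-- `w` strongly resolves `u` and `v`. -/
def StronglyResolves (G : SimpleGraph V) (w u v : V) : Prop :=
  G.dist w u = G.dist w v + G.dist v u ∨ G.dist w v = G.dist w u + G.dist u v

/-- `S` is a strong metric generator for `G`. -/
def IsStrongMetricGenerator (G : SimpleGraph V) (S : Set V) : Prop :=
  ∀ u v : V, u ≠ v → ∃ w ∈ S, StronglyResolves G w u v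

/-- The strong metric dimension of `G`. -/
noncomputable def sdim (G : SimpleGraph V) : ℕ :=
  sInf {n | ∃ S : Set V, S.ncard = n ∧ IsStrongMetricGenerator G S}

/-- `S` is a vertex cover of `H`. -/
def IsVertexCover (H : SimpleGraph V) (S : Set V) : Prop :=
  ∀ u v : V, H.Adj u v → u ∈ S ∨ v ∈ S

/-- The vertex cover number of `H`. -/
noncomputable def vertexCoverNumber (H : SimpleGraph V) : ℕ :=
  sInf {n | ∃ S : Set V, S.ncard = n ∧ _root_.IsVertexCover H S}

/-- The graph `G*`: distinct vertices adjacent iff at distance at least two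
or true twins. -/
def GStar (G : SimpleGraph V) : SimpleGraph V where
  Adj u v := u ≠ v ∧ (2 ≤ G.dist u v ∨ TrueTwins G u v)
  symm := by
    refine ⟨?_⟩
    rintro u v ⟨hne, h | h⟩
    · exact ⟨hne.symm, Or.inl (by rwa [G.dist_comm])⟩
    · exact ⟨hne.symm, Or.inr ⟨h.1.symm, h.2.symm⟩⟩
  loopless := by
    refine ⟨?_⟩
    rintro u ⟨hne, _⟩
    exact hne rfl

/-- The direct (tensor) product of two graphs. -/
def DirectProd {α β : Type*} (G : SimpleGraph α) (H : SimpleGraph β) :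
    SimpleGraph (α × β) where
  Adj x y := G.Adj x.1 y.1 ∧ H.Adj x.2 y.2
  symm := ⟨fun _ _ h => ⟨h.1.symm, h.2.symm⟩⟩
  loopless := ⟨fun x h => G.loopless.irrefl x.1 h.1⟩

/-- The strong product of two graphs. -/
def StrongProd {α β : Type*} (G : SimpleGraph α) (H : SimpleGraph β) :
    SimpleGraph (α × β) where
  Adj x y := x ≠ y ∧ (x.1 = y.1 ∨ G.Adj x.1 y.1) ∧ (x.2 = y.2 ∨ H.Adj x.2 y.2)
  symm := by
    refine ⟨?_⟩
    rintro x y ⟨hne, h1, h2⟩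
    exact ⟨hne.symm, h1.imp Eq.symm Adj.symm, h2.imp Eq.symm Adj.symm⟩
  loopless := by
    refine ⟨?_⟩
    rintro x ⟨hne, _⟩
    exact hne rfl

/-- The Cartesian sum (disjunctive product) of two graphs. -/
def CartSum {α β : Type*} (G : SimpleGraph α) (H : SimpleGraph β) :
    SimpleGraph (α × β) where
  Adj x y := G.Adj x.1 y.1 ∨ H.Adj x.2 y.2
  symm := ⟨fun _ _ h => h.imp Adj.symm Adj.symm⟩
  loopless := ⟨fun x h => h.elim (G.loopless.irrefl x.1) (H.loopless.irrefl x.2)⟩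

/-- The lexicographic product of two graphs. -/
def LexProd {α β : Type*} (G : SimpleGraph α) (H : SimpleGraph β) :
    SimpleGraph (α × β) where
  Adj x y := G.Adj x.1 y.1 ∨ (x.1 = y.1 ∧ H.Adj x.2 y.2)
  symm := ⟨fun _ _ h => h.imp Adj.symm (fun h => ⟨h.1.symm, h.2.symm⟩)⟩
  loopless := ⟨fun x h => h.elim (G.loopless.irrefl x.1) (fun h => H.loopless.irrefl x.2 h.2)⟩

/-- The disjoint union of `n` copies of the complete graph on `m` vertices. -/
def CopiesComplete (n m : ℕ) : SimpleGraph (Fin n × Fin m) where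
  Adj x y := x.1 = y.1 ∧ x.2 ≠ y.2
  symm := ⟨fun _ _ h => ⟨h.1.symm, h.2.symm⟩⟩
  loopless := ⟨fun x h => h.2 rfl⟩

/-- Every pair of vertices lies on a common cycle of length five. -/
def C5Connected (G : SimpleGraph V) : Prop :=
  ∀ u v : V, ∃ (w : V) (c : G.Walk w w), c.IsCycle ∧ c.length = 5 ∧
    u ∈ c.support ∧ v ∈ c.support


lemma complete_of_allMMD [Fintype V] (G : SimpleGraph V) (hG : G.Connected)
    (hmmd : ∀ u v : V, u ≠ v → MMD G u v) :
    ∀ x y : V, x ≠ y → G.Adj x y := by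
  by_contra hc
  push_neg at hc
  obtain ⟨x, y, hxy, hnadj⟩ := hc
  have hd0 : 0 < G.dist x y := hG.pos_dist_of_ne hxy
  obtain ⟨p, hp⟩ := hG.exists_walk_length_eq_dist x y
  cases p with
  | nil => simp at hp; exact absurd rfl hxy
  | @cons _ a _ h1 p' =>
    cases p' with
    | nil =>
      simp at hp
      exact hnadj (SimpleGraph.dist_eq_one_iff_adj.mp hp.symm)
    | @cons _ b _ h2 q =>
      have hlen : q.length + 2 = G.dist x y := by
        simpa [Nat.add_assoc] using hp
      have hbx : b ≠ x := by
        rintro rfl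
        have := SimpleGraph.dist_le q
        omega
      have hnxb : ¬ G.Adj x b := by
        intro hxb
        have := SimpleGraph.dist_le (SimpleGraph.Walk.cons hxb q)
        simp at this
        omega
      have hdxb : 2 ≤ G.dist x b := by
        have h0 : G.dist x b ≠ 0 := by
          simp [hG.dist_eq_zero_iff]
          exact fun e => hbx e.symm
        have h1' : G.dist x b ≠ 1 := by
          simpa [SimpleGraph.dist_eq_one_iff_adj] using hnxb
        omega
      have hdxa : G.dist x a = 1 := SimpleGraph.dist_eq_one_iff_adj.mpr h1
      have := (hmmd x a h1.ne).2 b h2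
      omega

lemma complete_allMMD (G : SimpleGraph V) (hG : G.Connected)
    (hcomp : ∀ x y : V, x ≠ y → G.Adj x y) {u v : V} (huv : u ≠ v) : MMD G u v := by
  have key : ∀ s t : V, s ≠ t → MaxDistant G s t := by
    intro s t hst
    intro w hw
    have h1 : G.dist t s = 1 := (SimpleGraph.dist_eq_one_iff_adj).mpr (hcomp t s hst.symm)
    rw [h1]
    by_cases hwt : w = t
    · simp [hwt, SimpleGraph.dist_self]
    · exact le_of_eq ((SimpleGraph.dist_eq_one_iff_adj).mpr (hcomp t w (Ne.symm hwt)))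
  exact ⟨key u v huv, key v u huv.symm⟩

theorem stmt4 [Fintype V] (G : SimpleGraph V) (hG : G.Connected)
    (hn : 2 ≤ Fintype.card V) :
    Nonempty (srGraph G ≃g (⊤ : SimpleGraph (Fin (Fintype.card V)))) ↔
      Nonempty (G ≃g (⊤ : SimpleGraph (Fin (Fintype.card V)))) := by
  classical
  constructor
  · rintro ⟨h⟩
    have hcard : Fintype.card (boundary G) = Fintype.card V := by
      rw [Fintype.card_congr h.toEquiv, Fintype.card_fin]
    have huniv : boundary G = Set.univ := (set_fintype_card_eq_univ_iff _).mp hcard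
    have hmmd : ∀ u v : V, u ≠ v → MMD G u v := by
      intro u v huv
      have hu : u ∈ boundary G := huniv ▸ Set.mem_univ u
      have hv : v ∈ boundary G := huniv ▸ Set.mem_univ v
      have hne : (⟨u, hu⟩ : boundary G) ≠ ⟨v, hv⟩ := by
        simp [Subtype.ext_iff]; exact huv
      have hadj : (srGraph G).Adj ⟨u, hu⟩ ⟨v, hv⟩ := by
        rw [← h.map_rel_iff]
        simpa using fun e => hne (h.toEquiv.injective e)
      exact hadj.2
    have hcomp := complete_of_allMMD G hG hmmd
    have hGtop : G = ⊤ := by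
      ext a b
      simp only [SimpleGraph.top_adj]
      exact ⟨fun h' => h'.ne, fun h' => hcomp a b h'⟩
    exact ⟨hGtop ▸ SimpleGraph.Iso.completeGraph (Fintype.equivFin V)⟩
  · rintro ⟨e⟩
    have hcomp : ∀ x y : V, x ≠ y → G.Adj x y := by
      intro x y hxy
      have : (⊤ : SimpleGraph (Fin (Fintype.card V))).Adj (e x) (e y) := by
        simpa using fun h' => hxy (e.toEquiv.injective h')
      exact e.map_rel_iff.mp this
    have huniv : boundary G = Set.univ := by
      ext u
      simp only [Set.mem_univ, iff_true]
      obtain ⟨v, hv⟩ := Fintype.exists_ne_of_one_lt_card hn u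
      exact ⟨v, (complete_allMMD G hG hcomp (Ne.symm hv)).1⟩
    have equiv : (boundary G) ≃ Fin (Fintype.card V) :=
      ((Equiv.setCongr huniv).trans (Equiv.Set.univ V)).trans (Fintype.equivFin V)
    refine ⟨⟨equiv, ?_⟩⟩
    intro a b
    constructor
    · intro hab
      have hne : a ≠ b := by
        rintro rfl; simp at hab
      have hvne : (a : V) ≠ (b : V) := fun e => hne (Subtype.ext e)
      exact ⟨hvne, complete_allMMD G hG hcomp hvne⟩
    · intro hab
      simp only [SimpleGraph.top_adj, ne_eq, EmbeddingLike.apply_eq_iff_eq]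
      rintro rfl
      exact hab.1 rfl
end

section
/- Let H be a finite connected graph of diameter at least four that has no pair of false twin vertices. Then the complement H^c is a connected graph of diameter two with no pair of true twin vertices, and the strong resolving graph (H^c)_SR is isomorphic to H. In particular, H is the strong resolving graph of a true twin-free graph of diameter two. -/
open SimpleGraph

variable {V : Type*}

section helpers

variable [Fintype V] {H : SimpleGraph V}

private lemma aux_nontrivial (hd : 4 ≤ H.diam) : Nontrivial V := by
  exact SimpleGraph.nontrivial_of_diam_ne_zero (G := H) (by omega)

/-- Common non-neighbor for an adjacent pair. -/
private lemma aux_common (hH : H.Connected) (hd : 4 ≤ H.diam) {u v : V}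
    (huv : H.Adj u v) : ∃ w, ¬H.Adj u w ∧ ¬H.Adj v w ∧ w ≠ u ∧ w ≠ v := by
  by_contra hcon
  push_neg at hcon
  have hne : Nontrivial V := aux_nontrivial hd
  have : Nonempty V := ⟨u⟩
  obtain ⟨x, y, hxy⟩ := H.exists_dist_eq_diam
  have hkeyL : ∀ a : V, H.dist a u ≤ 1 ∨ H.dist a v ≤ 1 := by
    intro a
    by_cases h1 : H.Adj u a
    · left; rw [SimpleGraph.dist_eq_one_iff_adj.mpr h1.symm]
    by_cases h2 : H.Adj v a
    · right; rw [SimpleGraph.dist_eq_one_iff_adj.mpr h2.symm]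
    by_cases ha : a = u
    · left; subst ha; simp [SimpleGraph.dist_self]
    · right; rw [hcon a h1 h2 ha]; simp [SimpleGraph.dist_self]
  have hkeyR : ∀ a : V, H.dist u a ≤ 1 ∨ H.dist v a ≤ 1 := by
    intro a
    by_cases h1 : H.Adj u a
    · left; rw [SimpleGraph.dist_eq_one_iff_adj.mpr h1]
    by_cases h2 : H.Adj v a
    · right; rw [SimpleGraph.dist_eq_one_iff_adj.mpr h2]
    by_cases ha : a = u
    · left; subst ha; simp [SimpleGraph.dist_self]
    · right; rw [hcon a h1 h2 ha]; simp [SimpleGraph.dist_self]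
  have hduv : H.dist u v = 1 := SimpleGraph.dist_eq_one_iff_adj.mpr huv
  have t1 : H.dist x y ≤ H.dist x u + H.dist u y := hH.dist_triangle
  have t2 : H.dist x y ≤ H.dist x v + H.dist v y := hH.dist_triangle
  have t3 : H.dist x y ≤ H.dist x u + (H.dist u v + H.dist v y) :=
    le_trans hH.dist_triangle (by gcongr; exact hH.dist_triangle)
  have t4 : H.dist x y ≤ H.dist x v + (H.dist v u + H.dist u y) :=
    le_trans hH.dist_triangle (by gcongr; exact hH.dist_triangle)
  have hdvu : H.dist v u = 1 := SimpleGraph.dist_eq_one_iff_adj.mpr huv.symm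
  have hx := hkeyL x
  have hy := hkeyR y
  rw [hxy] at t1 t2 t3 t4
  rw [hduv] at t3
  rw [hdvu] at t4
  omega

/-- Any two vertices are joined in `Hᶜ` by a walk of length at most 2. -/
private lemma aux_short_walk (hH : H.Connected) (hd : 4 ≤ H.diam) (u v : V) :
    ∃ p : Hᶜ.Walk u v, p.length ≤ 2 := by
  by_cases heq : u = v
  · subst heq; exact ⟨SimpleGraph.Walk.nil, by simp⟩
  by_cases hadj : H.Adj u v
  · obtain ⟨w, h1, h2, h3, h4⟩ := aux_common hH hd hadj
    have e1 : Hᶜ.Adj u w := ⟨fun h => h3 h.symm, h1⟩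
    have e2 : Hᶜ.Adj w v := ⟨h4, fun h => h2 h.symm⟩
    exact ⟨SimpleGraph.Walk.cons e1 (SimpleGraph.Walk.cons e2 SimpleGraph.Walk.nil),
      by simp⟩
  · exact ⟨SimpleGraph.Walk.cons ((H.compl_adj u v).mpr ⟨heq, hadj⟩)
      SimpleGraph.Walk.nil, by simp⟩

private lemma aux_dist_le_two (hH : H.Connected) (hd : 4 ≤ H.diam) (u v : V) :
    Hᶜ.dist u v ≤ 2 := by
  obtain ⟨p, hp⟩ := aux_short_walk hH hd u v
  exact le_trans (Hᶜ.dist_le p) hp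

private lemma aux_compl_connected (hH : H.Connected) (hd : 4 ≤ H.diam) :
    Hᶜ.Connected := by
  have : Nontrivial V := aux_nontrivial hd
  have hpre : Hᶜ.Preconnected := fun u v => by
    obtain ⟨p, _⟩ := aux_short_walk hH hd u v
    exact ⟨p⟩
  have : Nonempty V := ⟨Classical.arbitrary V⟩
  exact SimpleGraph.Connected.mk hpre

/-- An edge of `H` exists. -/
private lemma aux_exists_edge (hH : H.Connected) (hd : 4 ≤ H.diam) :
    ∃ a b : V, H.Adj a b := by
  have : Nontrivial V := aux_nontrivial hd
  have : Nonempty V := ⟨Classical.arbitrary V⟩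
  obtain ⟨x, y, hxy⟩ := H.exists_dist_eq_diam
  have hx0 : H.dist x y ≠ 0 := by omega
  obtain ⟨p, _⟩ := H.exists_walk_of_dist_ne_zero hx0
  cases p with
  | nil => simp at hx0
  | cons h _ => exact ⟨_, _, h⟩

/-- Every vertex has an `H`-neighbor. -/
private lemma aux_has_nbr (hH : H.Connected) (hd : 4 ≤ H.diam) (u : V) :
    ∃ v, H.Adj u v := by
  have : Nontrivial V := aux_nontrivial hd
  obtain ⟨z, hz⟩ := exists_ne u
  have h0 : H.dist u z ≠ 0 := by
    rw [SimpleGraph.dist_ne_zero_iff_ne_and_reachable]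
    exact ⟨hz.symm, hH.preconnected u z⟩
  obtain ⟨p, _⟩ := H.exists_walk_of_dist_ne_zero h0
  cases p with
  | nil => simp at h0
  | cons h _ => exact ⟨_, h⟩

/-- If `u ≠ v` are non-adjacent in `Hᶜ` then their `Hᶜ`-distance is 2. -/
private lemma aux_dist_eq_two (hH : H.Connected) (hd : 4 ≤ H.diam) {u v : V}
    (hne : u ≠ v) (hna : ¬ Hᶜ.Adj u v) : Hᶜ.dist u v = 2 := by
  have hle := aux_dist_le_two hH hd u v
  have h0 : Hᶜ.dist u v ≠ 0 :=
    ((aux_compl_connected hH hd).pos_dist_of_ne hne).ne'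
  have h1 : Hᶜ.dist u v ≠ 1 := fun h =>
    hna (SimpleGraph.dist_eq_one_iff_adj.mp h)
  omega

private lemma aux_no_true_twins (hH : H.Connected) (hd : 4 ≤ H.diam)
    (hft : ∀ u v : V, ¬ FalseTwins H u v) : ∀ u v : V, ¬ TrueTwins Hᶜ u v := by
  rintro u v ⟨hne, hset⟩
  have key : ∀ a : V, insert a (Hᶜ.neighborSet a) = (H.neighborSet a)ᶜ := by
    intro a
    ext w
    simp only [Set.mem_insert_iff, SimpleGraph.mem_neighborSet, SimpleGraph.compl_adj,
      Set.mem_compl_iff]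
    constructor
    · rintro (rfl | ⟨_, h⟩)
      · exact H.loopless.irrefl _
      · exact h
    · intro h
      by_cases hw : w = a
      · exact Or.inl hw
      · exact Or.inr ⟨fun he => hw he.symm, h⟩
  rw [key, key] at hset
  exact hft u v ⟨hne, compl_injective hset⟩

/-- `u` is maximally distant from any vertex at `Hᶜ`-distance 2. -/
private lemma aux_maxdist (hH : H.Connected) (hd : 4 ≤ H.diam) {u v : V}
    (h2 : Hᶜ.dist v u = 2) : MaxDistant Hᶜ u v := by
  intro w _
  rw [h2]
  exact aux_dist_le_two hH hd v w

private lemma aux_boundary (hH : H.Connected) (hd : 4 ≤ H.diam) :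
    ∀ u : V, u ∈ boundary Hᶜ := by
  intro u
  obtain ⟨v, hv⟩ := aux_has_nbr hH hd u
  have hna : ¬ Hᶜ.Adj v u := by
    rw [SimpleGraph.compl_adj]
    push_neg
    intro _; exact hv.symm
  exact ⟨v, aux_maxdist hH hd (aux_dist_eq_two hH hd hv.symm.ne hna)⟩

private lemma aux_mmd_iff (hH : H.Connected) (hd : 4 ≤ H.diam)
    (hft : ∀ u v : V, ¬ FalseTwins H u v) (u v : V) :
    (u ≠ v ∧ MMD Hᶜ u v) ↔ H.Adj u v := by
  have hconn := aux_compl_connected hH hd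
  constructor
  · rintro ⟨hne, hm1, hm2⟩
    by_contra hna
    have hadj : Hᶜ.Adj u v := (H.compl_adj u v).mpr ⟨hne, hna⟩
    -- from mutual maximal distance at distance 1, derive true twins
    have hdist : Hᶜ.dist v u = 1 := SimpleGraph.dist_eq_one_iff_adj.mpr hadj.symm
    have hdist' : Hᶜ.dist u v = 1 := SimpleGraph.dist_eq_one_iff_adj.mpr hadj
    have step : ∀ a b w : V, Hᶜ.dist a w ≤ 1 → w = a ∨ Hᶜ.Adj a w := by
      intro a b w h
      interval_cases h' : Hᶜ.dist a w
      · exact Or.inl (hconn.dist_eq_zero_iff.mp h').symm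
      · exact Or.inr (SimpleGraph.dist_eq_one_iff_adj.mp h')
    have key : ∀ w : V, w ∈ insert u (Hᶜ.neighborSet u) ↔
        w ∈ insert v (Hᶜ.neighborSet v) := by
      intro w
      simp only [Set.mem_insert_iff, SimpleGraph.mem_neighborSet]
      constructor
      · rintro (rfl | hw)
        · exact Or.inr hadj.symm
        · have := hm1 w hw
          rw [hdist] at this
          rcases step v u w this with h | h
          · exact Or.inl h
          · exact Or.inr h
      · rintro (rfl | hw)
        · exact Or.inr hadj
        · have := hm2 w hw
          rw [hdist'] at this
          rcases step u v w this with h | h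
          · exact Or.inl h
          · exact Or.inr h
    exact aux_no_true_twins hH hd hft u v ⟨hne, Set.ext key⟩
  · intro hadj
    have hna : ¬ Hᶜ.Adj u v := by
      rw [SimpleGraph.compl_adj]; push_neg; intro _; exact hadj
    have hna' : ¬ Hᶜ.Adj v u := fun h => hna h.symm
    refine ⟨hadj.ne, aux_maxdist hH hd (aux_dist_eq_two hH hd hadj.symm.ne hna'),
      aux_maxdist hH hd (aux_dist_eq_two hH hd hadj.ne hna)⟩

end helpers

theorem stmt11 [Fintype V] (H : SimpleGraph V) (hH : H.Connected)
    (hd : 4 ≤ H.diam) (hft : ∀ u v : V, ¬ FalseTwins H u v) :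
    Hᶜ.Connected ∧ Hᶜ.diam = 2 ∧ (∀ u v : V, ¬ TrueTwins Hᶜ u v) ∧
      Nonempty (srGraph Hᶜ ≃g H) := by
  have hnt : Nontrivial V := aux_nontrivial hd
  have hne : Nonempty V := ⟨Classical.arbitrary V⟩
  have hconn := aux_compl_connected hH hd
  refine ⟨hconn, ?_, aux_no_true_twins hH hd hft, ?_⟩
  · -- diameter of the complement is 2
    have hled : Hᶜ.diam ≤ 2 := by
      obtain ⟨u, v, huv⟩ := Hᶜ.exists_dist_eq_diam
      rw [← huv]
      exact aux_dist_le_two hH hd u v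
    have htop : Hᶜ.ediam ≠ ⊤ := by
      obtain ⟨u, v, huv⟩ := Hᶜ.exists_edist_eq_ediam_of_finite
      rw [← huv]
      exact SimpleGraph.edist_ne_top_iff_reachable.mpr (hconn.preconnected u v)
    obtain ⟨a, b, hab⟩ := aux_exists_edge hH hd
    have hna : ¬ Hᶜ.Adj a b := by
      rw [SimpleGraph.compl_adj]; push_neg; intro _; exact hab
    have h2 : Hᶜ.dist a b = 2 := aux_dist_eq_two hH hd hab.ne hna
    have hge : 2 ≤ Hᶜ.diam := h2 ▸ Hᶜ.dist_le_diam htop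
    omega
  · -- the strong resolving graph of the complement is isomorphic to H
    refine ⟨⟨⟨Subtype.val, fun v => ⟨v, aux_boundary hH hd v⟩,
      fun a => rfl, fun v => rfl⟩, ?_⟩⟩
    intro a b
    exact (aux_mmd_iff hH hd hft a.val b.val).symm
end
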